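/- Assume G is abelian and let H be a closed subgroup of G with {e} ≠ H ≠ G. Then λ_{H,1} = 1, and for every n ≥ 2, λ_{H,n} = 2^n · λ̄_{H,n}, where λ̄_{H,n} denotes the number of H-trees on {1,…,n} having no one-leaf vertices (i.e., every internal vertex has at least two children). -/
import Mathlib

variable {G : Type*} [CommGroup G] {V : Type*} [AddCommGroup V] [Module ℂ V]

/-- The subspace `Fix(H)` of vectors fixed by every element of the subgroup `H`
under the representation `ρ`. -/
def fixedSpace (ρ : Representation ℂ G V) (H : Subgroup G) : Submodule ℂ V where
  carrier := {v | ∀ h ∈ H, ρ h v = v}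
  add_mem' := by
    intro a b ha hb h hh
    rw [map_add, ha h hh, hb h hh]
  zero_mem' := by
    intro h hh
    exact map_zero _
  smul_mem' := by
    intro c a ha h hh
    rw [map_smul, ha h hh]

/-- A subgroup `H ≤ G` is closed (w.r.t. `ρ`) if every subgroup `K` with `H ≤ K`
and `Fix(K) = Fix(H)` satisfies `K = H`. -/
def IsClosedSubgroup (ρ : Representation ℂ G V) (H : Subgroup G) : Prop :=
  ∀ K : Subgroup G, H ≤ K → fixedSpace ρ K = fixedSpace ρ H → K = H

open scoped Pointwise

/-- A vertex of a labelled forest on the leaf set `{1,…,n}` (encoded as `Fin n`):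
`leaves` is the set of leaves of the forest lying below the vertex, `label` is the
subgroup labelling the vertex, and, for a leaf `l` below the vertex, `coset l` is
the coset `g_l K` obtained by composing the edge labels on the path from the
vertex down to the leaf `l` (as in the paper, if the path carries, from the top,
the coset labels `a₁K, a₂K₂, …, a_lK_l`, then `coset l = a_l ⋯ a₂ a₁ K`); on
leaves not below the vertex, `coset` is `∅`.  Within the forests considered below
a vertex is uniquely determined by this data, and conversely the single-edge
labels are recovered from it, so this encoding is faithful. -/
structure FVertex (n : ℕ) (G : Type*) [Group G] where
  leaves : Finset (Fin n)
  label : Subgroup G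
  coset : Fin n → Set G

/-- `[P] ≤ [Q]` for conjugacy classes of subgroups: some `G`-conjugate of `P` is
contained in `Q`. -/
def ConjLE {G : Type*} [Group G] (P Q : Subgroup G) : Prop :=
  ∃ a : G, P.map (MulAut.conj a).toMonoidHom ≤ Q

/-- `[P] ≨ [Q]` (strictly). -/
def ConjLT {G : Type*} [Group G] (P Q : Subgroup G) : Prop :=
  ConjLE P Q ∧ ¬ ConjLE Q P

/-- `v` lies strictly below `w` in the forest: either the leaf set of `v` is
strictly smaller, or the leaf sets agree and the vertices lie on a common chain
of unique-child vertices, ordered by their labels. -/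
def FVertex.below {n : ℕ} {G : Type*} [Group G] (v w : FVertex n G) : Prop :=
  v.leaves ⊂ w.leaves ∨ (v.leaves = w.leaves ∧ ConjLT v.label w.label)

/-- `w` is a direct descendant (child) of `v` in the forest `F`. -/
def IsDirectChild {n : ℕ} {G : Type*} [Group G] (F : Set (FVertex n G))
    (w v : FVertex n G) : Prop :=
  w.below v ∧ ¬ ∃ u ∈ F, w.below u ∧ u.below v

/-- The forests of the family 𝓕(n,G,V): rooted oriented forests with leaves
labelled bijectively by `{1,…,n}` (isolated "fallen" leaves are allowed and are
implicit: they are the leaves lying below no vertex), at least one internal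
vertex, internal vertices labelled by closed subgroups of `G`, and edges labelled
by cosets, subject to conditions (1)-(5) of the paper.  A forest is encoded by
its set of internal vertices, each vertex carrying its leaf set, its subgroup
label and the composed coset data of the paths towards its leaves. -/
def IsFGForest {n : ℕ} (ρ : Representation ℂ G V) (F : Set (FVertex n G)) : Prop :=
  -- a finite forest with at least one internal vertex
  F.Finite ∧ F.Nonempty ∧
  -- every internal vertex has at least one leaf below it
  (∀ v ∈ F, v.leaves.Nonempty) ∧
  -- internal vertices are labelled by closed subgroups
  (∀ v ∈ F, IsClosedSubgroup ρ v.label) ∧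
  -- the leaf sets form a laminar family (forest structure)
  (∀ v ∈ F, ∀ w ∈ F, (v.leaves ∩ w.leaves).Nonempty →
      v.leaves ⊆ w.leaves ∨ w.leaves ⊆ v.leaves) ∧
  -- (1) if an internal vertex labelled P descends from one labelled Q, then [P] ≤ [Q]
  (∀ v ∈ F, ∀ w ∈ F, w.leaves ⊂ v.leaves → ConjLE w.label v.label) ∧
  -- (1)&(2) vertices with the same leaf set form a chain of unique children with
  -- strictly increasing labels (in particular a unique internal child has
  -- strictly smaller label class)
  (∀ v ∈ F, ∀ w ∈ F, v ≠ w → v.leaves = w.leaves →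
      ConjLT v.label w.label ∨ ConjLT w.label v.label) ∧
  -- (2) if a leaf is the unique child of a vertex, its label is not {e}
  (∀ v ∈ F, ∀ l : Fin n, v.leaves = {l} →
      (¬ ∃ w ∈ F, w ≠ v ∧ w.leaves = v.leaves ∧ ConjLT w.label v.label) →
      v.label ≠ ⊥) ∧
  -- (3) the label G appears in at most one tree, and a vertex labelled G has at
  -- most one direct descendant labelled G: the G-labelled vertices are pairwise
  -- comparable
  (∀ v ∈ F, ∀ w ∈ F, v.label = ⊤ → w.label = ⊤ → v = w ∨ v.below w ∨ w.below v) ∧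
  -- (4) the (composed) coset data consists of left cosets of the vertex label …
  (∀ v ∈ F, ∀ l ∈ v.leaves, ∃ a : G, v.coset l = a • (v.label : Set G)) ∧
  (∀ v ∈ F, ∀ l : Fin n, l ∉ v.leaves → v.coset l = ∅) ∧
  -- … and is compatible along edges: the edge from `v` (labelled Q) to a direct
  -- child `w` (labelled P) carries a coset label aQ with a⁻¹Pa ⊆ Q, and (by (5))
  -- the edge towards the child subtree containing the smallest leaf carries eQ
  (∀ v ∈ F, ∀ w ∈ F, IsDirectChild F w v →
      ∃ a : G, (w.label.map (MulAut.conj a⁻¹).toMonoidHom ≤ v.label) ∧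
        (∀ l ∈ w.leaves, v.coset l = w.coset l * (a • (v.label : Set G))) ∧
        (∀ hv : v.leaves.Nonempty, v.leaves.min' hv ∈ w.leaves → a ∈ v.label)) ∧
  -- (5) the composed coset towards the smallest leaf below a vertex is eK
  (∀ v ∈ F, ∀ hv : v.leaves.Nonempty, v.coset (v.leaves.min' hv) = (v.label : Set G))

/-- The set of roots (maximal vertices) of the forest `F`: each corresponds to a
tree of `F`. -/
def rootsOf {n : ℕ} {G : Type*} [Group G] (F : Set (FVertex n G)) :
    Set (FVertex n G) :=
  {v | v ∈ F ∧ ∀ w ∈ F, ¬ v.below w}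

open Classical in
/-- The fallen leaves of `F`: the leaves lying below no internal vertex. -/
noncomputable def fallenLeaves {n : ℕ} {G : Type*} [Group G]
    (F : Set (FVertex n G)) : Finset (Fin n) :=
  Finset.univ.filter fun l => ∀ v ∈ F, l ∉ v.leaves

/-- The number of connected components of `F` (trees and fallen leaves each count
as one component). -/
noncomputable def components {n : ℕ} {G : Type*} [Group G]
    (F : Set (FVertex n G)) : ℕ :=
  (rootsOf F).ncard + (fallenLeaves F).card

open Classical in
/-- The number of leaves of `F` attached to `H`-labelled vertices, i.e. whose
parent (the minimal internal vertex above them) is labelled `H`. -/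
noncomputable def attachedCount {n : ℕ} {G : Type*} [Group G]
    (F : Set (FVertex n G)) (H : Subgroup G) : ℕ :=
  (Finset.univ.filter fun l : Fin n => ∃ v ∈ F, l ∈ v.leaves ∧ v.label = H ∧
    ∀ w ∈ F, l ∈ w.leaves → (v = w ∨ v.below w)).card

/-- An `H`-tree on the leaf set `{1,…,m}`: a single rooted oriented tree, with
leaves bijectively labelled by `{1,…,m}`, all of whose internal vertices are
labelled by the (closed) subgroup `H`, with edges labelled by cosets of `H`,
normalized as in (5); every internal vertex has at least two children or a single
child which is a leaf (the latter only if `H ≠ {e}`). -/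
def IsHTree {m : ℕ} (ρ : Representation ℂ G V) (H : Subgroup G)
    (F : Set (FVertex m G)) : Prop :=
  IsFGForest ρ F ∧ (∀ v ∈ F, v.label = H) ∧ ∃ v ∈ F, v.leaves = Finset.univ

/-- `λ_{H,i}`: the number of `H`-trees on the leaf set `{1,…,i}`. -/
noncomputable def lamHT (ρ : Representation ℂ G V) (H : Subgroup G) (i : ℕ) : ℕ :=
  Nat.card {F : Set (FVertex i G) // IsHTree ρ H F}

/-!
STATEMENT 17 (G abelian, H closed, {e} ≠ H ≠ G): λ_{H,1} = 1, and for n ≥ 2,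
λ_{H,n} = 2^n · λ̄_{H,n}, where λ̄_{H,n} is the number of H-trees on {1,…,n} with
no one-leaf vertices (every internal vertex has at least two children, i.e. at
least two leaves below it).
-/
section AuxHT

open scoped Pointwise

lemma HT.conj_map_eq (a : G) (P : Subgroup G) :
    P.map (MulAut.conj a).toMonoidHom = P := by
  ext x; simp [MulAut.conj_apply, mul_comm]

lemma HT.conjLE_iff {P Q : Subgroup G} : ConjLE P Q ↔ P ≤ Q := by
  constructor
  · rintro ⟨a, h⟩; rwa [HT.conj_map_eq] at h
  · intro h; exact ⟨1, by rwa [HT.conj_map_eq]⟩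

lemma HT.not_conjLT_self (P : Subgroup G) : ¬ ConjLT P P :=
  fun h => h.2 (HT.conjLE_iff.mpr le_rfl)

lemma HT.conjLE_self (P : Subgroup G) : ConjLE P P := HT.conjLE_iff.mpr le_rfl

lemma HT.mem_of_smul_coe_eq {a : G} {H : Subgroup G} (h : a • (H : Set G) = H) :
    a ∈ H := by
  have : a ∈ a • (H : Set G) := ⟨1, H.one_mem, mul_one a⟩
  rwa [h] at this

lemma HT.coe_mul_smul (a : G) (H : Subgroup G) :
    (H : Set G) * (a • (H : Set G)) = a • (H : Set G) := by
  rw [mul_smul_comm, coe_mul_coe]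

lemma HT.ext' {n : ℕ} {v w : FVertex n G} (h1 : v.leaves = w.leaves)
    (h2 : v.label = w.label) (h3 : v.coset = w.coset) : v = w := by
  cases v; cases w; simp_all

/-- The canonical one-leaf vertex with leaf `l` and label `H`. -/
def HTsingle {n : ℕ} (H : Subgroup G) (l : Fin n) : FVertex n G :=
  ⟨{l}, H, fun m => if m = l then (H : Set G) else ∅⟩

@[simp] lemma HTsingle_leaves {n : ℕ} (H : Subgroup G) (l : Fin n) :
    (HTsingle H l).leaves = {l} := rfl

@[simp] lemma HTsingle_label {n : ℕ} (H : Subgroup G) (l : Fin n) :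
    (HTsingle H l).label = H := rfl

@[simp] lemma HTsingle_coset_self {n : ℕ} (H : Subgroup G) (l : Fin n) :
    (HTsingle H l).coset l = (H : Set G) := if_pos rfl

lemma HTsingle_coset_ne {n : ℕ} (H : Subgroup G) {l m : Fin n} (h : m ≠ l) :
    (HTsingle H l).coset m = ∅ := if_neg h

lemma HTsingle_injective {n : ℕ} (H : Subgroup G) {l m : Fin n}
    (h : HTsingle H l = HTsingle H m) : l = m := by
  have := congrArg FVertex.leaves h
  simpa [Finset.singleton_inj] using this

lemma HT.below_iff {n : ℕ} {v w : FVertex n G} (hlab : v.label = w.label) :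
    v.below w ↔ v.leaves ⊂ w.leaves := by
  unfold FVertex.below
  constructor
  · rintro (h | ⟨-, h⟩)
    · exact h
    · rw [hlab] at h; exact absurd h (HT.not_conjLT_self _)
  · exact Or.inl

lemma HT.not_below_of_singleton {n : ℕ} {w u : FVertex n G} {l : Fin n}
    (hlab : w.label = u.label) (hu : u.leaves = {l}) (hw : w.leaves.Nonempty) :
    ¬ w.below u := by
  rw [HT.below_iff hlab, hu, Finset.ssubset_singleton_iff]
  intro h
  rw [h] at hw
  exact Finset.not_nonempty_empty hw

end AuxHT

section MainHT

open scoped Pointwise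

variable (ρ : Representation ℂ G V)

/-- In an `H`-tree, leaf sets determine vertices. -/
lemma HT.eq_of_leaves_eq {n : ℕ} {H : Subgroup G} {F : Set (FVertex n G)}
    (hF : IsHTree ρ H F) {v w : FVertex n G} (hv : v ∈ F) (hw : w ∈ F)
    (h : v.leaves = w.leaves) : v = w := by
  by_contra hne
  obtain ⟨-, -, -, -, -, -, h7, -⟩ := hF.1
  have h7 := h7 v hv w hw hne h
  have hv' := hF.2.1 v hv
  have hw' := hF.2.1 w hw
  rw [hv', hw'] at h7
  rcases h7 with h7 | h7 <;> exact HT.not_conjLT_self _ h7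

/-- A one-leaf vertex of an `H`-tree is the canonical one. -/
lemma HT.eq_single {n : ℕ} {H : Subgroup G} {F : Set (FVertex n G)}
    (hF : IsHTree ρ H F) {v : FVertex n G} (hv : v ∈ F) {l : Fin n}
    (hl : v.leaves = {l}) : v = HTsingle H l := by
  obtain ⟨⟨-, -, -, -, -, -, -, -, -, -, h11, -, h13⟩, hlab, -⟩ := hF
  have hne : v.leaves.Nonempty := ⟨l, by rw [hl]; exact Finset.mem_singleton_self l⟩
  have hmin : v.leaves.min' hne = l := by
    have h0 := Finset.min'_mem v.leaves hne
    have h2 : v.leaves.min' hne ∈ ({l} : Finset (Fin n)) := by rw [← hl]; exact h0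
    exact Finset.mem_singleton.mp h2
  have h13 := h13 v hv hne
  rw [hmin, hlab v hv] at h13
  refine HT.ext' (by rw [hl]; rfl) (by rw [hlab v hv]; rfl) ?_
  funext m
  by_cases hm : m = l
  · subst hm
    rw [h13, HTsingle_coset_self]
  · rw [h11 v hv m (by rw [hl, Finset.mem_singleton]; exact hm),
      HTsingle_coset_ne H hm]

end MainHT

section CoreGlue

open scoped Pointwise

variable (ρ : Representation ℂ G V)

/-- Vertices of `F` with at least two leaves. -/
def HTcore {n : ℕ} (F : Set (FVertex n G)) : Set (FVertex n G) :=
  {v ∈ F | 2 ≤ v.leaves.card}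

open Classical in
/-- The set of leaves carrying a one-leaf vertex. -/
noncomputable def HTsset {n : ℕ} (H : Subgroup G) (F : Set (FVertex n G)) :
    Finset (Fin n) :=
  Finset.univ.filter fun l => HTsingle H l ∈ F

/-- Attach one-leaf vertices at the leaves in `S`. -/
def HTglue {n : ℕ} (H : Subgroup G) (S : Finset (Fin n)) (F : Set (FVertex n G)) :
    Set (FVertex n G) :=
  F ∪ (fun l => HTsingle H l) '' ↑S

lemma HT.mem_glue {n : ℕ} {H : Subgroup G} {S : Finset (Fin n)}
    {F : Set (FVertex n G)} {v : FVertex n G} :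
    v ∈ HTglue H S F ↔ v ∈ F ∨ ∃ l ∈ S, HTsingle H l = v := by
  simp [HTglue]

lemma HT.directChild_mono {n : ℕ} {H : Subgroup G} {F' F : Set (FVertex n G)}
    (hlab : ∀ u ∈ F, u.label = H) (hsing : ∀ u ∈ F, u ∉ F' → ∃ l, u.leaves = {l})
    {w v : FVertex n G} (hw : w.leaves.Nonempty) (hwlab : w.label = H) :
    IsDirectChild F' w v → IsDirectChild F w v := by
  rintro ⟨hb, hmid⟩
  refine ⟨hb, ?_⟩
  rintro ⟨u, hu, hwu, huv⟩
  by_cases h : u ∈ F'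
  · exact hmid ⟨u, h, hwu, huv⟩
  · obtain ⟨l, hl⟩ := hsing u hu h
    exact HT.not_below_of_singleton (hwlab.trans (hlab u hu).symm) hl hw hwu

lemma HT.directChild_anti {n : ℕ} {F' F : Set (FVertex n G)} (hsub : F' ⊆ F)
    {w v : FVertex n G} (h : IsDirectChild F w v) : IsDirectChild F' w v :=
  ⟨h.1, fun ⟨u, hu, h1, h2⟩ => h.2 ⟨u, hsub hu, h1, h2⟩⟩

lemma HT.core_htree {n : ℕ} {H : Subgroup G} {F : Set (FVertex n G)} (hn : 2 ≤ n)
    (hF : IsHTree ρ H F) :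
    IsHTree ρ H (HTcore F) ∧ ∀ v ∈ HTcore F, 2 ≤ v.leaves.card := by
  obtain ⟨⟨h1, h2, h3, h4, h5, h6, h7, h8, h9, h10, h11, h12, h13⟩, hlab, hroot⟩ := hF
  have hsub : HTcore F ⊆ F := fun v hv => hv.1
  have hbig : ∀ v ∈ HTcore F, 2 ≤ v.leaves.card := fun v hv => hv.2
  have hsing : ∀ u ∈ F, u ∉ HTcore F → ∃ l : Fin n, u.leaves = {l} := by
    intro u hu hnc
    have hpos := (h3 u hu).card_pos
    have hc1 : u.leaves.card = 1 := by
      by_contra hcc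
      exact hnc ⟨hu, by omega⟩
    exact Finset.card_eq_one.mp hc1
  obtain ⟨r, hr, hru⟩ := hroot
  have hrc : r ∈ HTcore F := ⟨hr, by rw [hru]; simpa using hn⟩
  refine ⟨⟨⟨h1.subset hsub, ⟨r, hrc⟩, fun v hv => h3 v (hsub hv),
      fun v hv => h4 v (hsub hv),
      fun v hv w hw => h5 v (hsub hv) w (hsub hw),
      fun v hv w hw => h6 v (hsub hv) w (hsub hw),
      fun v hv w hw => h7 v (hsub hv) w (hsub hw),
      ?_, fun v hv w hw => h9 v (hsub hv) w (hsub hw),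
      fun v hv => h10 v (hsub hv), fun v hv => h11 v (hsub hv),
      ?_, fun v hv => h13 v (hsub hv)⟩,
      fun v hv => hlab v (hsub hv), ⟨r, hrc, hru⟩⟩, hbig⟩
  · intro v hv l hl _
    exact absurd (hbig v hv) (by rw [hl]; simp)
  · intro v hv w hw hd
    exact h12 v (hsub hv) w (hsub hw)
      (HT.directChild_mono hlab hsing (h3 w (hsub hw)) (hlab w (hsub hw)) hd)

lemma HT.glue_htree {n : ℕ} {H : Subgroup G} (S : Finset (Fin n))
    {F : Set (FVertex n G)}
    (hH : IsClosedSubgroup ρ H) (hbot : H ≠ ⊥) (htop : H ≠ ⊤)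
    (hF : IsHTree ρ H F) (hbig : ∀ v ∈ F, 2 ≤ v.leaves.card) :
    IsHTree ρ H (HTglue H S F) := by
  obtain ⟨⟨h1, h2, h3, h4, h5, h6, h7, h8, h9, h10, h11, h12, h13⟩, hlab, hroot⟩ := hF
  have hsub : F ⊆ HTglue H S F := Set.subset_union_left
  have glab : ∀ v ∈ HTglue H S F, v.label = H := by
    intro v hv
    rcases HT.mem_glue.mp hv with hv | ⟨l, -, rfl⟩
    · exact hlab v hv
    · rfl
  have gne : ∀ v ∈ HTglue H S F, v.leaves.Nonempty := by
    intro v hv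
    rcases HT.mem_glue.mp hv with hv | ⟨l, -, rfl⟩
    · exact h3 v hv
    · exact Finset.singleton_nonempty l
  have hnb : ∀ v ∈ HTglue H S F, ∀ l : Fin n, ¬ v.below (HTsingle H l) :=
    fun v hv l => HT.not_below_of_singleton (glab v hv) rfl (gne v hv)
  obtain ⟨r, hr, hru⟩ := hroot
  refine ⟨⟨h1.union (S.finite_toSet.image _), ⟨r, hsub hr⟩, gne, ?_, ?_, ?_, ?_, ?_,
      ?_, ?_, ?_, ?_, ?_⟩, glab, ⟨r, hsub hr, hru⟩⟩
  -- (4) closed labels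
  · intro v hv
    rw [glab v hv]
    exact hH
  -- (5) laminar
  · intro v hv w hw hint
    rcases HT.mem_glue.mp hv with hv' | ⟨l, -, rfl⟩
    · rcases HT.mem_glue.mp hw with hw' | ⟨m, -, rfl⟩
      · exact h5 v hv' w hw' hint
      · obtain ⟨x, hx⟩ := hint
        rw [Finset.mem_inter] at hx
        have : x = m := by simpa using hx.2
        subst this
        exact Or.inr (by simpa using hx.1)
    · obtain ⟨x, hx⟩ := hint
      rw [Finset.mem_inter] at hx
      have : x = l := by simpa using hx.1
      subst this
      exact Or.inl (by simpa using hx.2)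
  -- (6)
  · intro v hv w hw _
    rw [glab v hv, glab w hw]
    exact HT.conjLE_self H
  -- (7)
  · intro v hv w hw hne hleq
    rcases HT.mem_glue.mp hv with hv' | ⟨l, -, rfl⟩
    · rcases HT.mem_glue.mp hw with hw' | ⟨m, -, rfl⟩
      · exact h7 v hv' w hw' hne hleq
      · exact absurd (hbig v hv') (by rw [hleq]; simp)
    · rcases HT.mem_glue.mp hw with hw' | ⟨m, -, rfl⟩
      · exact absurd (hbig w hw') (by rw [← hleq]; simp)
      · have : l = m := by simpa [Finset.singleton_inj] using hleq
        subst this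
        exact absurd rfl hne
  -- (8)
  · intro v hv l _ _
    rw [glab v hv]
    exact hbot
  -- (9)
  · intro v hv w hw htv _
    exact absurd ((glab v hv).symm.trans htv) htop
  -- (10)
  · intro v hv l hl
    rcases HT.mem_glue.mp hv with hv' | ⟨m, -, rfl⟩
    · exact h10 v hv' l hl
    · have : l = m := by simpa using hl
      subst this
      exact ⟨1, by rw [HTsingle_coset_self, HTsingle_label, one_smul]⟩
  -- (11)
  · intro v hv l hl
    rcases HT.mem_glue.mp hv with hv' | ⟨m, -, rfl⟩
    · exact h11 v hv' l hl
    · exact HTsingle_coset_ne H (by simpa using hl)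
  -- (12)
  · intro v hv w hw hd
    rcases HT.mem_glue.mp hv with hv' | ⟨l, -, rfl⟩
    · rcases HT.mem_glue.mp hw with hw' | ⟨m, hmS, rfl⟩
      · exact h12 v hv' w hw' (HT.directChild_anti hsub hd)
      · -- w is a one-leaf vertex attached below v
        have hb : (HTsingle H m).leaves ⊂ v.leaves :=
          (HT.below_iff (by rw [HTsingle_label, hlab v hv'])).mp hd.1
        have hmem : m ∈ v.leaves := hb.1 (Finset.mem_singleton_self m)
        obtain ⟨a, ha⟩ := h10 v hv' m hmem
        rw [hlab v hv'] at ha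
        refine ⟨a, ?_, ?_, ?_⟩
        · rw [HTsingle_label, HT.conj_map_eq, hlab v hv']
        · intro l' hl'
          have : l' = m := by simpa using hl'
          subst this
          rw [hlab v hv', HTsingle_coset_self, HT.coe_mul_smul]
          exact ha
        · intro hvne hminmem
          have hmin : v.leaves.min' hvne = m := by simpa using hminmem
          have h13' := h13 v hv' hvne
          rw [hmin, hlab v hv'] at h13'
          rw [hlab v hv']
          exact HT.mem_of_smul_coe_eq (ha.symm.trans h13')
    · exact absurd hd.1 (hnb w hw l)
  -- (13)
  · intro v hv hvne
    rcases HT.mem_glue.mp hv with hv' | ⟨m, -, rfl⟩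
    · exact h13 v hv' hvne
    · have hmin : (HTsingle H m).leaves.min' hvne = m := by
        have := Finset.min'_mem (HTsingle H m).leaves hvne
        simpa using this
      rw [hmin, HTsingle_coset_self, HTsingle_label]

lemma HT.glue_core {n : ℕ} {H : Subgroup G} {F : Set (FVertex n G)}
    (hF : IsHTree ρ H F) : HTglue H (HTsset H F) (HTcore F) = F := by
  ext v
  rw [HT.mem_glue]
  constructor
  · rintro (hv | ⟨l, hl, rfl⟩)
    · exact hv.1
    · simpa [HTsset] using hl
  · intro hv
    have hne := hF.1.2.2.1 v hv
    rcases Nat.lt_or_ge v.leaves.card 2 with hc | hc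
    · have hpos := hne.card_pos
      have hc1 : v.leaves.card = 1 := by omega
      obtain ⟨l, hl⟩ := Finset.card_eq_one.mp hc1
      refine Or.inr ⟨l, ?_, (HT.eq_single ρ hF hv hl).symm⟩
      simp only [HTsset, Finset.mem_filter, Finset.mem_univ, true_and]
      rw [← HT.eq_single ρ hF hv hl]
      exact hv
    · exact Or.inl ⟨hv, hc⟩

lemma HT.sset_glue {n : ℕ} {H : Subgroup G} {F : Set (FVertex n G)}
    (hbig : ∀ v ∈ F, 2 ≤ v.leaves.card) (S : Finset (Fin n)) :
    HTsset H (HTglue H S F) = S := by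
  ext l
  simp only [HTsset, Finset.mem_filter, Finset.mem_univ, true_and]
  rw [HT.mem_glue]
  constructor
  · rintro (h | ⟨l', hl', he⟩)
    · have := hbig _ h
      simp at this
    · rwa [HTsingle_injective H he] at hl'
  · intro h
    exact Or.inr ⟨l, h, rfl⟩

lemma HT.core_glue {n : ℕ} {H : Subgroup G} {F : Set (FVertex n G)}
    (hbig : ∀ v ∈ F, 2 ≤ v.leaves.card) (S : Finset (Fin n)) :
    HTcore (HTglue H S F) = F := by
  ext v
  constructor
  · rintro ⟨hv, hc⟩
    rcases HT.mem_glue.mp hv with hv' | ⟨l, -, rfl⟩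
    · exact hv'
    · simp at hc
  · intro hv
    exact ⟨Or.inl hv, hbig v hv⟩

end CoreGlue

section FinOne

open scoped Pointwise

variable (ρ : Representation ℂ G V)

lemma HT.htree_fin_one {H : Subgroup G} {F : Set (FVertex 1 G)}
    (hF : IsHTree ρ H F) : F = {HTsingle H 0} := by
  ext v
  rw [Set.mem_singleton_iff]
  constructor
  · intro hv
    have hne := hF.1.2.2.1 v hv
    have hl : v.leaves = {0} := by
      obtain ⟨l, hl⟩ := hne
      have hl0 : l = 0 := Subsingleton.elim l 0
      subst hl0
      apply Finset.eq_singleton_iff_unique_mem.mpr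
      exact ⟨hl, fun x _ => Subsingleton.elim x 0⟩
    exact HT.eq_single ρ hF hv hl
  · rintro rfl
    obtain ⟨r, hr, hru⟩ := hF.2.2
    have : r.leaves = {0} := by rw [hru]; decide
    rw [← HT.eq_single ρ hF hr this]
    exact hr

lemma HT.single_htree {H : Subgroup G} (hH : IsClosedSubgroup ρ H)
    (hbot : H ≠ ⊥) (htop : H ≠ ⊤) :
    IsHTree ρ H ({HTsingle H (0 : Fin 1)} : Set (FVertex 1 G)) := by
  refine ⟨⟨Set.finite_singleton _, ⟨_, rfl⟩, ?_, ?_, ?_, ?_, ?_, ?_, ?_, ?_, ?_, ?_, ?_⟩,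
    ?_, ⟨HTsingle H (0 : Fin 1), rfl, by
      rw [HTsingle_leaves]
      exact Finset.eq_univ_iff_forall.mpr fun x => by
        rw [Finset.mem_singleton]; exact Subsingleton.elim x 0⟩⟩
  · rintro v rfl
    exact Finset.singleton_nonempty 0
  · rintro v rfl
    exact hH
  · rintro v rfl w rfl _
    exact Or.inl (subset_refl _)
  · rintro v rfl w rfl _
    exact HT.conjLE_self H
  · rintro v rfl w rfl hne _
    exact absurd rfl hne
  · rintro v rfl l _ _
    exact hbot
  · rintro v rfl w rfl _ _
    exact Or.inl rfl
  · rintro v rfl l hl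
    have h0 : l = 0 := Subsingleton.elim l 0
    subst h0
    exact ⟨1, by rw [HTsingle_coset_self, HTsingle_label, one_smul]⟩
  · rintro v rfl l hl
    have h0 : l = 0 := Subsingleton.elim l 0
    subst h0
    exact absurd (Finset.mem_singleton_self 0) hl
  · rintro v rfl w rfl hd
    exact absurd hd.1
      (HT.not_below_of_singleton rfl rfl (Finset.singleton_nonempty 0))
  · rintro v rfl hvne
    have hmin : (HTsingle H (0 : Fin 1)).leaves.min' hvne = 0 := by
      have := Finset.min'_mem (HTsingle H (0 : Fin 1)).leaves hvne
      simpa using this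
    rw [hmin, HTsingle_coset_self, HTsingle_label]
  · rintro v rfl
    rfl

end FinOne


theorem lamHT_eq_two_pow_mul
    [Fintype G] [FiniteDimensional ℂ V] (ρ : Representation ℂ G V)
    (hfaith : Function.Injective ρ) (hfix : fixedSpace ρ ⊤ = ⊥)
    (H : Subgroup G) (hH : IsClosedSubgroup ρ H) (hbot : H ≠ ⊥) (htop : H ≠ ⊤) :
    lamHT ρ H 1 = 1 ∧
    ∀ n : ℕ, 2 ≤ n →
      lamHT ρ H n =
        2 ^ n * Nat.card {F : Set (FVertex n G) // IsHTree ρ H F ∧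
          ∀ v ∈ F, 2 ≤ v.leaves.card} := by
  constructor
  · -- the case n = 1
    rw [lamHT, Nat.card_eq_one_iff_unique]
    refine ⟨⟨fun a b => Subtype.ext
      ((HT.htree_fin_one ρ a.2).trans (HT.htree_fin_one ρ b.2).symm)⟩,
      ⟨⟨_, HT.single_htree ρ hH hbot htop⟩⟩⟩
  · intro n hn
    rw [lamHT]
    have e : {F : Set (FVertex n G) // IsHTree ρ H F} ≃
        Finset (Fin n) × {F : Set (FVertex n G) // IsHTree ρ H F ∧
          ∀ v ∈ F, 2 ≤ v.leaves.card} :=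
      { toFun := fun F => (HTsset H F.1, ⟨HTcore F.1,
          ⟨(HT.core_htree ρ hn F.2).1, (HT.core_htree ρ hn F.2).2⟩⟩)
        invFun := fun p => ⟨HTglue H p.1 p.2.1,
          HT.glue_htree ρ p.1 hH hbot htop p.2.2.1 p.2.2.2⟩
        left_inv := fun F => Subtype.ext (HT.glue_core ρ F.2)
        right_inv := fun p => Prod.ext_iff.mpr
          ⟨HT.sset_glue p.2.2.2 p.1, Subtype.ext (HT.core_glue p.2.2.2 p.1)⟩ }
    rw [Nat.card_congr e, Nat.card_prod]
    congr 1
    simp [Nat.card_eq_fintype_card]
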